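/- If a multipartition μ = (μ^1, …, μ^l) is κ-restricted for a multicharge κ, then μ' = ((μ^1)', …, (μ^l)') is also κ-restricted, where for a partition ν the partition ν' is obtained by subtracting 1 from each nonzero part and discarding parts that become 0. -/

import Mathlib

/-- The `j`-th part of a partition (given as a list), `0` outside range. -/
def part (l : List ℕ) (j : ℤ) : ℕ := if 1 ≤ j then l.getD (j - 1).toNat 0 else 0

/-- A list is a partition when it is weakly decreasing with positive entries. -/
def IsPartition (l : List ℕ) : Prop := l.Chain' (· ≥ ·) ∧ ∀ x ∈ l, 0 < x

/-- The truncated partition `ν'`: subtract `1` from each part, discard zeros. -/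
def pderiv (l : List ℕ) : List ℕ := (l.map (· - 1)).filter (fun x => 0 < x)

/-- `κ`-restrictedness of a multipartition. -/
def Restricted (l : ℕ) (κ : ℕ → ℤ) (μ : ℕ → List ℕ) : Prop :=
  ∀ i, i + 1 < l → ∀ j : ℤ, 1 ≤ j →
    part (μ i) (j + κ i - κ (i + 1)) ≤ part (μ (i + 1)) j

lemma getD_pderiv (l : List ℕ) (h : IsPartition l) (n : ℕ) :
    (pderiv l).getD n 0 = l.getD n 0 - 1 := by
  induction l generalizing n with
  | nil => simp [pderiv]
  | cons a t ih =>
    have ht : IsPartition t :=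
      ⟨h.1.tail, fun x hx => h.2 x (List.mem_cons_of_mem _ hx)⟩
    by_cases ha : 1 < a
    · have hp : pderiv (a :: t) = (a - 1) :: pderiv t := by
        simp only [pderiv, List.map_cons, List.filter_cons]
        have : 0 < a - 1 := by omega
        simp [this]
      rw [hp]
      cases n with
      | zero => simp
      | succ n => simpa using ih ht n
    · have ha1 : a = 1 :=
        le_antisymm (not_lt.1 ha) (h.2 a List.mem_cons_self)
      have hall : ∀ x ∈ a :: t, x = 1 := by
        intro x hx
        have hx1 : 0 < x := h.2 x hx
        rcases List.mem_cons.mp hx with rfl | hx'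
        · exact ha1
        · have hpw := List.isChain_iff_pairwise.mp h.1
          have := (List.pairwise_cons.mp hpw).1 x hx'
          omega
      have hp : pderiv (a :: t) = [] := by
        apply List.filter_eq_nil_iff.mpr
        intro x hx
        rcases List.mem_map.mp hx with ⟨y, hy, rfl⟩
        have := hall y hy
        simp [this]
      rw [hp]
      have hle : (a :: t).getD n 0 ≤ 1 := by
        rcases lt_or_ge n (a :: t).length with hn | hn
        · rw [List.getD_eq_getElem _ _ hn]
          exact le_of_eq (hall _ (List.getElem_mem hn))
        · rw [List.getD_eq_default _ _ hn]; omega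
      simp only [List.getD_nil]
      omega

lemma part_pderiv (l : List ℕ) (h : IsPartition l) (j : ℤ) :
    part (pderiv l) j = part l j - 1 := by
  unfold part
  split_ifs with hj
  · exact getD_pderiv l h _
  · rfl

/-- if `μ` is `κ`-restricted then so is `μ'`. -/
theorem deriv_restricted (l : ℕ) (κ : ℕ → ℤ) (μ : ℕ → List ℕ)
    (hκ : ∀ i, i + 1 < l → κ (i + 1) ≤ κ i)
    (hpart : ∀ i, i < l → IsPartition (μ i))
    (hres : Restricted l κ μ) :
    Restricted l κ (fun i => pderiv (μ i)) := by
  intro i hi j hj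
  have hi1 : i < l := by omega
  have hi2 : i + 1 < l := hi
  rw [part_pderiv _ (hpart i hi1), part_pderiv _ (hpart (i + 1) hi2)]
  exact Nat.sub_le_sub_right (hres i hi j hj) 1
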